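/- For each integer d ≥ 2, the distortion of F_d in G_d is a polynomial of degree d, i.e. Dist_{G_d}^{F_d} ∼ n^d, where G_d = ⟨x₁, …, x_d, t | t x₁ t^{-1} = x₁, t x_i t^{-1} = x_i x_{i-1}^{-1} for 2 ≤ i ≤ d⟩ and F_d is the subgroup generated by x₁, …, x_d; moreover F_d is a normal finitely generated free subgroup with G_d/F_d infinite cyclic. -/

import Mathlib

/-- The word length of `g` with respect to a set `S` of letters. -/
noncomputable def wordLength {G : Type*} [Group G] (S : Set G) (g : G) : ℕ :=
  sInf {n | ∃ l : List G, l.length = n ∧ (∀ x ∈ l, x ∈ S ∨ x⁻¹ ∈ S) ∧ l.prod = g}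

/-- The distortion function: `Dist(r) = max { |h|_T : h ∈ H, |h|_S ≤ r }`. -/
noncomputable def distortion {G : Type*} [Group G] (S T : Set G) (H : Subgroup G)
    (r : ℕ) : ℕ :=
  sSup {n | ∃ h ∈ H, wordLength S h ≤ r ∧ wordLength T h = n}

/-- `f ⪯ g`. -/
def Dominated (f g : ℕ → ℕ) : Prop :=
  ∃ A B C D : ℕ, 0 < A ∧ 0 < B ∧ 0 < C ∧ ∀ x : ℕ, D < x → f x ≤ A * g (B * x) + C * x

/-- The generator `x_{i+1}` of the free group underlying the presentation of `G_d`. -/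
def gdX (d : ℕ) (i : Fin d) : FreeGroup (Fin d ⊕ Unit) := FreeGroup.of (Sum.inl i)

/-- The generator `t` of the free group underlying the presentation of `G_d`. -/
def gdT (d : ℕ) : FreeGroup (Fin d ⊕ Unit) := FreeGroup.of (Sum.inr ())

/-- The predecessor index. -/
def fpred {d : ℕ} (i : Fin d) : Fin d :=
  ⟨i.val - 1, lt_of_le_of_lt (Nat.sub_le _ _) i.isLt⟩

/-- The image of `x_i` under conjugation by `t`. -/
def gdTarget (d : ℕ) (i : Fin d) : FreeGroup (Fin d ⊕ Unit) :=
  if i.val = 0 then gdX d i else gdX d i * (gdX d (fpred i))⁻¹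

/-- The relators of `G_d`. -/
def gdRels (d : ℕ) : Set (FreeGroup (Fin d ⊕ Unit)) :=
  {r | ∃ i : Fin d, r = gdT d * gdX d i * (gdT d)⁻¹ * (gdTarget d i)⁻¹}

/-- The group `G_d = ⟨x₁, …, x_d, t ∣ t x₁ t⁻¹ = x₁, t x_i t⁻¹ = x_i x_{i-1}⁻¹⟩`. -/
abbrev GD (d : ℕ) := PresentedGroup (gdRels d)

/-- The image of a generator in `G_d`. -/
def gdGen (d : ℕ) (a : Fin d ⊕ Unit) : GD d := PresentedGroup.of a

/-- The image of the generator `x_{i+1}` in `G_d`. -/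
def gdx (d : ℕ) (i : Fin d) : GD d := PresentedGroup.of (Sum.inl i)

/-- The subgroup `F_d` of `G_d` generated by `x₁, …, x_d`. -/
def FD (d : ℕ) : Subgroup (GD d) := Subgroup.closure (Set.range (gdx d))

/-- `f ∼ g`. -/
def FEquiv (f g : ℕ → ℕ) : Prop := Dominated f g ∧ Dominated g f

/-- The natural homomorphism from the free group on `x₁, …, x_d` to `G_d`. -/
def xlift (d : ℕ) : FreeGroup (Fin d) →* GD d := FreeGroup.lift (gdx d)

section WL
variable {G : Type*} [Group G] {S : Set G} {g a b : G}

lemma wordLength_le_length (l : List G) (hl : ∀ x ∈ l, x ∈ S ∨ x⁻¹ ∈ S) :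
    wordLength S l.prod ≤ l.length := Nat.sInf_le ⟨l, rfl, hl, rfl⟩

lemma exists_repr (hg : g ∈ Subgroup.closure S) :
    ∃ l : List G, (∀ x ∈ l, x ∈ S ∨ x⁻¹ ∈ S) ∧ l.prod = g := by
  induction hg using Subgroup.closure_induction with
  | mem x hx => exact ⟨[x], by simpa using Or.inl hx, by simp⟩
  | one => exact ⟨[], by simp, by simp⟩
  | mul x y hx hy ihx ihy =>
      obtain ⟨l1, h1, e1⟩ := ihx; obtain ⟨l2, h2, e2⟩ := ihy
      refine ⟨l1 ++ l2, ?_, by simp [e1, e2]⟩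
      intro x hx; rcases List.mem_append.1 hx with h | h
      exacts [h1 x h, h2 x h]
  | inv x hx ihx =>
      obtain ⟨l, h1, e1⟩ := ihx
      refine ⟨(l.map (·⁻¹)).reverse, ?_, by rw [← List.prod_inv_reverse, e1]⟩
      intro x hx
      simp only [List.mem_reverse, List.mem_map] at hx
      obtain ⟨y, hy, rfl⟩ := hx
      rcases h1 y hy with h | h
      · exact Or.inr (by simpa using h)
      · exact Or.inl h

lemma exists_word (hg : g ∈ Subgroup.closure S) :
    ∃ l : List G, l.length = wordLength S g ∧ (∀ x ∈ l, x ∈ S ∨ x⁻¹ ∈ S) ∧ l.prod = g := by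
  have hne : {n | ∃ l : List G, l.length = n ∧ (∀ x ∈ l, x ∈ S ∨ x⁻¹ ∈ S) ∧ l.prod = g}.Nonempty := by
    obtain ⟨l, h1, h2⟩ := exists_repr hg
    exact ⟨l.length, l, rfl, h1, h2⟩
  exact Nat.sInf_mem hne

lemma wordLength_one : wordLength S (1 : G) = 0 :=
  Nat.le_zero.1 (wordLength_le_length [] (by simp))

lemma wordLength_mul_le (ha : a ∈ Subgroup.closure S) (hb : b ∈ Subgroup.closure S) :
    wordLength S (a * b) ≤ wordLength S a + wordLength S b := by
  obtain ⟨l1, hl1, m1, e1⟩ := exists_word ha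
  obtain ⟨l2, hl2, m2, e2⟩ := exists_word hb
  have : wordLength S ((l1 ++ l2).prod) ≤ (l1 ++ l2).length := by
    apply wordLength_le_length
    intro x hx; rcases List.mem_append.1 hx with h | h
    exacts [m1 x h, m2 x h]
  simpa [e1, e2, hl1, hl2] using this

lemma wordLength_inv_le (ha : a ∈ Subgroup.closure S) :
    wordLength S a⁻¹ ≤ wordLength S a := by
  obtain ⟨l, hl, m, e⟩ := exists_word ha
  have : wordLength S (((l.map (·⁻¹)).reverse).prod) ≤ ((l.map (·⁻¹)).reverse).length :=
    wordLength_le_length _ (by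
      intro x hx
      simp only [List.mem_reverse, List.mem_map] at hx
      obtain ⟨y, hy, rfl⟩ := hx
      rcases m y hy with h | h
      · exact Or.inr (by simpa using h)
      · exact Or.inl h)
  rw [← List.prod_inv_reverse, e] at this
  simpa [hl] using this

lemma wordLength_le_one (ha : a ∈ S) : wordLength S a ≤ 1 := by
  simpa using wordLength_le_length [a] (by simpa using Or.inl ha)

lemma wordLength_pow_le (ha : a ∈ Subgroup.closure S) (n : ℕ) :
    wordLength S (a ^ n) ≤ n * wordLength S a := by
  induction n with
  | zero => simp [wordLength_one]
  | succ n ih =>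
      have := wordLength_mul_le (pow_mem ha n) ha
      rw [← pow_succ] at this
      calc wordLength S (a ^ (n+1)) ≤ n * wordLength S a + wordLength S a := le_trans this (by omega)
      _ = (n+1) * wordLength S a := by ring

end WL

/- ### the automorphism -/

def phiTgt (d : ℕ) (i : Fin d) : FreeGroup (Fin d) :=
  if i.val = 0 then .of i else .of i * (.of (fpred i))⁻¹

def PhiM (d : ℕ) : FreeGroup (Fin d) →* FreeGroup (Fin d) := FreeGroup.lift (phiTgt d)

def psa (d : ℕ) : ℕ → FreeGroup (Fin d)
  | 0 => 1
  | k+1 => (if h : k < d then .of ⟨k, h⟩ else 1) * psa d k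

def PsiM (d : ℕ) : FreeGroup (Fin d) →* FreeGroup (Fin d) :=
  FreeGroup.lift (fun i => psa d (i.val + 1))

lemma PhiM_of (d : ℕ) (i : Fin d) : PhiM d (.of i) = phiTgt d i := FreeGroup.lift_apply_of
lemma PsiM_of (d : ℕ) (i : Fin d) : PsiM d (.of i) = psa d (i.val + 1) := FreeGroup.lift_apply_of

lemma PhiM_psa (d : ℕ) : ∀ k (h : k < d), PhiM d (psa d (k+1)) = .of ⟨k, h⟩ := by
  intro k
  induction k with
  | zero =>
      intro h
      simp only [psa, dif_pos h, map_mul, map_one, mul_one, PhiM_of]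
      simp [phiTgt]
  | succ k ih =>
      intro h
      have hk : k < d := Nat.lt_of_succ_lt h
      have step : PhiM d (psa d (k+1)) = .of ⟨k, hk⟩ := ih hk
      have e0 : psa d (k+2) = .of ⟨k+1, h⟩ * psa d (k+1) := by
        show (if h : k+1 < d then (FreeGroup.of ⟨k+1, h⟩ : FreeGroup (Fin d)) else 1) * psa d (k+1) = _
        rw [dif_pos h]
      rw [e0, map_mul, step, PhiM_of]
      have e1 : phiTgt d ⟨k+1, h⟩ = .of ⟨k+1, h⟩ * (.of ⟨k, hk⟩)⁻¹ := by
        simp [phiTgt, fpred]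
      rw [e1]
      group

lemma PhiPsi (d : ℕ) : (PhiM d).comp (PsiM d) = MonoidHom.id _ := by
  apply FreeGroup.ext_hom
  intro i
  simp only [MonoidHom.comp_apply, MonoidHom.id_apply, PsiM_of]
  rw [PhiM_psa d i.val i.isLt]

lemma PsiPhi (d : ℕ) : (PsiM d).comp (PhiM d) = MonoidHom.id _ := by
  apply FreeGroup.ext_hom
  intro i
  simp only [MonoidHom.comp_apply, MonoidHom.id_apply, PhiM_of]
  by_cases h0 : i.val = 0
  · rw [phiTgt, if_pos h0, PsiM_of]
    have : i.val + 1 = 1 := by omega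
    rw [this]
    have h0' : (0:ℕ) < d := by omega
    simp only [psa, dif_pos h0']
    have : (⟨0, h0'⟩ : Fin d) = i := Fin.ext (by simp [h0])
    rw [this]; simp
  · rw [phiTgt, if_neg h0, map_mul, map_inv, PsiM_of, PsiM_of]
    have hi : (fpred i).val + 1 = i.val := by simp [fpred]; omega
    rw [hi]
    have : psa d (i.val + 1) = (if h : i.val < d then (FreeGroup.of ⟨i.val, h⟩ : FreeGroup (Fin d)) else 1) * psa d i.val := rfl
    rw [this, dif_pos i.isLt]
    have : (⟨i.val, i.isLt⟩ : Fin d) = i := by ext; rfl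
    rw [this]; group

def PhiA (d : ℕ) : MulAut (FreeGroup (Fin d)) :=
  MonoidHom.toMulEquiv (PhiM d) (PsiM d) (PsiPhi d) (PhiPsi d)

lemma PhiA_apply (d : ℕ) (w : FreeGroup (Fin d)) : PhiA d w = PhiM d w := rfl
lemma PhiA_symm_apply (d : ℕ) (w : FreeGroup (Fin d)) : (PhiA d)⁻¹ w = PsiM d w := rfl

def phiZ (d : ℕ) : Multiplicative ℤ →* MulAut (FreeGroup (Fin d)) := zpowersHom _ (PhiA d)

abbrev GSD (d : ℕ) := SemidirectProduct (FreeGroup (Fin d)) (Multiplicative ℤ) (phiZ d)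

/- ### θ : GD d →* GSD d -/

def thetaGen (d : ℕ) : Fin d ⊕ Unit → GSD d :=
  Sum.elim (fun i => SemidirectProduct.inl (.of i)) (fun _ => SemidirectProduct.inr (.ofAdd 1))

lemma phiZ_one (d : ℕ) : phiZ d (.ofAdd 1) = PhiA d := by
  show (zpowersHom _ (PhiA d)) (.ofAdd 1) = PhiA d
  simp [zpowersHom_apply]

lemma liftTheta_gdX (d : ℕ) (i : Fin d) :
    FreeGroup.lift (thetaGen d) (gdX d i) = SemidirectProduct.inl (.of i) := by
  rw [gdX, FreeGroup.lift_apply_of]; rfl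

lemma liftTheta_gdT (d : ℕ) :
    FreeGroup.lift (thetaGen d) (gdT d) = SemidirectProduct.inr (.ofAdd 1) := by
  rw [gdT, FreeGroup.lift_apply_of]; rfl

lemma liftTheta_target (d : ℕ) (i : Fin d) :
    FreeGroup.lift (thetaGen d) (gdTarget d i) = SemidirectProduct.inl (phiTgt d i) := by
  by_cases h0 : i.val = 0
  · rw [gdTarget, if_pos h0, phiTgt, if_pos h0, liftTheta_gdX]
  · rw [gdTarget, if_neg h0, phiTgt, if_neg h0, map_mul, map_inv, liftTheta_gdX, liftTheta_gdX,
      map_mul, map_inv]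

lemma theta_rels (d : ℕ) : ∀ r ∈ gdRels d, FreeGroup.lift (thetaGen d) r = 1 := by
  rintro r ⟨i, rfl⟩
  rw [map_mul, map_mul, map_mul, map_inv, map_inv, liftTheta_gdT, liftTheta_gdX, liftTheta_target]
  have key : SemidirectProduct.inr (Multiplicative.ofAdd 1) * SemidirectProduct.inl (FreeGroup.of i) *
      (SemidirectProduct.inr (G := Multiplicative ℤ) (φ := phiZ d) (Multiplicative.ofAdd 1))⁻¹ =
      SemidirectProduct.inl (phiTgt d i) := by
    rw [← map_inv, ← SemidirectProduct.inl_aut, phiZ_one, PhiA_apply, PhiM_of]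
  rw [key]
  simp

def theta (d : ℕ) : GD d →* GSD d := PresentedGroup.toGroup (theta_rels d)

lemma theta_gdx (d : ℕ) (i : Fin d) : theta d (gdx d i) = SemidirectProduct.inl (.of i) :=
  PresentedGroup.toGroup.of (theta_rels d)

def Tg (d : ℕ) : GD d := gdGen d (Sum.inr ())

lemma theta_Tg (d : ℕ) : theta d (Tg d) = SemidirectProduct.inr (.ofAdd 1) :=
  PresentedGroup.toGroup.of (theta_rels d)

lemma theta_xlift (d : ℕ) (w : FreeGroup (Fin d)) :
    theta d (xlift d w) = SemidirectProduct.inl w := by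
  have : (theta d).comp (xlift d) = SemidirectProduct.inl := by
    apply FreeGroup.ext_hom
    intro i
    simp only [MonoidHom.comp_apply, xlift, FreeGroup.lift_apply_of]
    exact theta_gdx d i
  exact DFunLike.congr_fun this w

lemma xlift_injective (d : ℕ) : Function.Injective (xlift d) := by
  intro a b h
  have : SemidirectProduct.inl (φ := phiZ d) a = SemidirectProduct.inl b := by
    rw [← theta_xlift, ← theta_xlift, h]
  exact SemidirectProduct.inl_injective this

lemma range_xlift (d : ℕ) : (xlift d).range = FD d := by
  rw [xlift, FreeGroup.range_lift_eq_closure]; rfl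

/- ### the relation in GD -/

def mkQ (d : ℕ) : FreeGroup (Fin d ⊕ Unit) →* GD d :=
  QuotientGroup.mk' (Subgroup.normalClosure (gdRels d))

lemma mkQ_gdX (d : ℕ) (i : Fin d) : mkQ d (gdX d i) = gdx d i := rfl
lemma mkQ_gdT (d : ℕ) : mkQ d (gdT d) = Tg d := rfl

lemma mkQ_target (d : ℕ) (i : Fin d) : mkQ d (gdTarget d i) = xlift d (phiTgt d i) := by
  by_cases h0 : i.val = 0
  · rw [gdTarget, if_pos h0, phiTgt, if_pos h0, mkQ_gdX, xlift, FreeGroup.lift_apply_of]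
  · rw [gdTarget, if_neg h0, phiTgt, if_neg h0, map_mul, map_inv, map_mul, map_inv,
      mkQ_gdX, mkQ_gdX, xlift, FreeGroup.lift_apply_of, FreeGroup.lift_apply_of]

lemma gd_rel (d : ℕ) (i : Fin d) :
    Tg d * gdx d i * (Tg d)⁻¹ = xlift d (phiTgt d i) := by
  have h1 : mkQ d (gdT d * gdX d i * (gdT d)⁻¹ * (gdTarget d i)⁻¹) = 1 :=
    (QuotientGroup.eq_one_iff _).2 (Subgroup.subset_normalClosure ⟨i, rfl⟩)
  rw [map_mul, map_mul, map_mul, map_inv, map_inv, mul_inv_eq_one, mkQ_gdT, mkQ_gdX,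
    mkQ_target] at h1
  exact h1

/- ### conjugation identities -/

lemma xlift_Phi (d : ℕ) (w : FreeGroup (Fin d)) :
    xlift d (PhiM d w) = Tg d * xlift d w * (Tg d)⁻¹ := by
  have : (xlift d).comp (PhiM d) = (MulAut.conj (Tg d)).toMonoidHom.comp (xlift d) := by
    apply FreeGroup.ext_hom
    intro i
    simp only [MonoidHom.comp_apply, PhiM_of, MulEquiv.coe_toMonoidHom, MulAut.conj_apply]
    rw [show xlift d (FreeGroup.of i) = gdx d i from FreeGroup.lift_apply_of, ← gd_rel]
  have h := DFunLike.congr_fun this w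
  simpa [MulAut.conj_apply] using h

lemma xlift_Psi (d : ℕ) (w : FreeGroup (Fin d)) :
    xlift d (PsiM d w) = (Tg d)⁻¹ * xlift d w * Tg d := by
  have h := xlift_Phi d (PsiM d w)
  have h2 : PhiM d (PsiM d w) = w := DFunLike.congr_fun (PhiPsi d) w
  rw [h2] at h
  rw [h]
  group

lemma xlift_PhiA_zpow (d : ℕ) (m : ℤ) (w : FreeGroup (Fin d)) :
    xlift d ((PhiA d ^ m) w) = Tg d ^ m * xlift d w * (Tg d) ^ (-m) := by
  induction m using Int.induction_on with
  | zero => simp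
  | succ k ih =>
      have e : (PhiA d ^ ((k : ℤ) + 1)) w = PhiM d ((PhiA d ^ (k:ℤ)) w) := by
        rw [show ((k:ℤ)+1) = 1 + (k:ℤ) by ring, zpow_add, zpow_one]
        rfl
      rw [e, xlift_Phi, ih]
      rw [show ((k:ℤ)+1) = 1 + (k:ℤ) by ring, zpow_add, zpow_one, neg_add, zpow_add]
      group
  | pred k ih =>
      have e : (PhiA d ^ (-(k : ℤ) - 1)) w = PsiM d ((PhiA d ^ (-(k:ℤ))) w) := by
        rw [show (-(k:ℤ) - 1) = -1 + -(k:ℤ) by ring, zpow_add, zpow_neg_one]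
        rfl
      rw [e, xlift_Psi, ih]
      rw [show (-(k:ℤ) - 1) = -1 + -(k:ℤ) by ring, zpow_add, zpow_neg_one, neg_add, zpow_add]
      group

/- ### σ : GSD d →* GD d and the kernel -/

def sigma (d : ℕ) : GSD d →* GD d :=
  SemidirectProduct.lift (xlift d) (zpowersHom _ (Tg d)) (by
    intro g
    apply FreeGroup.ext_hom
    intro i
    simp only [MonoidHom.comp_apply, MulEquiv.coe_toMonoidHom, MulAut.conj_apply]
    show xlift d ((phiZ d g) (FreeGroup.of i)) = Tg d ^ g.toAdd * xlift d (FreeGroup.of i) * (Tg d ^ g.toAdd)⁻¹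
    have : phiZ d g = PhiA d ^ g.toAdd := rfl
    rw [this, xlift_PhiA_zpow]
    group)

lemma sigma_theta (d : ℕ) : (sigma d).comp (theta d) = MonoidHom.id _ := by
  apply PresentedGroup.ext
  intro a
  rcases a with i | u
  · show sigma d (theta d (gdx d i)) = gdx d i
    rw [theta_gdx, sigma, SemidirectProduct.lift_inl]
    exact FreeGroup.lift_apply_of
  · show sigma d (theta d (Tg d)) = Tg d
    rw [theta_Tg, sigma, SemidirectProduct.lift_inr]
    show Tg d ^ ((1:ℤ)) = Tg d
    simp

def psiZ (d : ℕ) : GD d →* Multiplicative ℤ := SemidirectProduct.rightHom.comp (theta d)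

lemma psiZ_xlift (d : ℕ) (w : FreeGroup (Fin d)) : psiZ d (xlift d w) = 1 := by
  rw [psiZ, MonoidHom.comp_apply, theta_xlift, SemidirectProduct.rightHom_inl]

lemma psiZ_Tg (d : ℕ) : psiZ d (Tg d) = Multiplicative.ofAdd 1 := by
  rw [psiZ, MonoidHom.comp_apply, theta_Tg, SemidirectProduct.rightHom_inr]

lemma ker_psiZ (d : ℕ) : (psiZ d).ker = FD d := by
  apply le_antisymm
  · intro g hg
    have h1 : SemidirectProduct.rightHom (theta d g) = 1 := hg
    have h2 : theta d g = SemidirectProduct.inl (theta d g).left := by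
      ext
      · rfl
      · simp only [SemidirectProduct.right_inl]
        exact h1
    have h4 := DFunLike.congr_fun (sigma_theta d) g
    rw [MonoidHom.comp_apply, MonoidHom.id_apply] at h4
    rw [← range_xlift]
    refine ⟨(theta d g).left, ?_⟩
    calc xlift d (theta d g).left
        = sigma d (SemidirectProduct.inl (theta d g).left) := by
          rw [sigma, SemidirectProduct.lift_inl]
      _ = sigma d (theta d g) := by rw [← h2]
      _ = g := h4
  · rw [FD]
    rw [Subgroup.closure_le]
    rintro g ⟨i, rfl⟩
    show psiZ d (gdx d i) = 1
    have : gdx d i = xlift d (.of i) := (FreeGroup.lift_apply_of).symm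
    rw [this, psiZ_xlift]

lemma psiZ_surjective (d : ℕ) : Function.Surjective (psiZ d) := by
  intro z
  refine ⟨Tg d ^ z.toAdd, ?_⟩
  rw [map_zpow, psiZ_Tg]
  rw [← ofAdd_zsmul]
  simp

lemma FD_normal (d : ℕ) : (FD d).Normal := by
  rw [← ker_psiZ]; exact MonoidHom.normal_ker _

lemma FD_fg (d : ℕ) : (FD d).FG := by
  rw [Subgroup.fg_iff]
  exact ⟨Set.range (gdx d), rfl, Set.finite_range _⟩

lemma closure_S_top (d : ℕ) : Subgroup.closure (Set.range (gdGen d)) = ⊤ :=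
  PresentedGroup.closure_range_of (gdRels d)

lemma mem_closS (d : ℕ) (g : GD d) : g ∈ Subgroup.closure (Set.range (gdGen d)) := by
  rw [closure_S_top]; trivial

/- ### growth lemmas -/

lemma mem_closT (d : ℕ) (w : FreeGroup (Fin d)) :
    xlift d w ∈ Subgroup.closure (Set.range (gdx d)) := by
  have : Subgroup.closure (Set.range (gdx d)) = FD d := rfl
  rw [this, ← range_xlift]
  exact ⟨w, rfl⟩

lemma gdx_eq_xlift (d : ℕ) (i : Fin d) : gdx d i = xlift d (.of i) :=
  (FreeGroup.lift_apply_of).symm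

lemma growth_pos (d : ℕ) : ∀ k : ℕ, ∀ i : Fin d,
    wordLength (Set.range (gdx d)) (xlift d ((PhiA d ^ k) (.of i))) ≤ (k+1)^(i.val) := by
  intro k
  induction k with
  | zero =>
      intro i
      simp only [pow_zero]
      have : ((1 : MulAut (FreeGroup (Fin d)))) (FreeGroup.of i) = FreeGroup.of i := rfl
      rw [this, ← gdx_eq_xlift]
      calc wordLength (Set.range (gdx d)) (gdx d i) ≤ 1 := wordLength_le_one (Set.mem_range_self _)
        _ ≤ (0+1)^(i.val) := by simp
  | succ k ih =>
      intro i
      have e : (PhiA d ^ (k+1)) (FreeGroup.of i) = (PhiA d ^ k) (phiTgt d i) := by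
        rw [pow_succ, MulAut.mul_apply, PhiA_apply, PhiM_of]
      rw [e]
      by_cases h0 : i.val = 0
      · rw [phiTgt, if_pos h0]
        calc wordLength (Set.range (gdx d)) (xlift d ((PhiA d ^ k) (.of i)))
            ≤ (k+1)^(i.val) := ih i
          _ ≤ (k+1+1)^(i.val) := Nat.pow_le_pow_left (by omega) _
      · rw [phiTgt, if_neg h0]
        have e2 : (PhiA d ^ k) (FreeGroup.of i * (FreeGroup.of (fpred i))⁻¹)
            = (PhiA d ^ k) (FreeGroup.of i) * ((PhiA d ^ k) (FreeGroup.of (fpred i)))⁻¹ := by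
          rw [map_mul, map_inv]
        rw [e2, map_mul, map_inv]
        have b1 := ih i
        have b2 : wordLength (Set.range (gdx d)) ((xlift d ((PhiA d ^ k) (.of (fpred i))))⁻¹)
            ≤ (k+1)^((fpred i).val) :=
          le_trans (wordLength_inv_le (mem_closT d _)) (ih (fpred i))
        have hsum := wordLength_mul_le (mem_closT d ((PhiA d ^ k) (.of i)))
          (Subgroup.inv_mem _ (mem_closT d ((PhiA d ^ k) (.of (fpred i)))))
        refine le_trans hsum (le_trans (Nat.add_le_add b1 b2) ?_)
        have hj : (fpred i).val = i.val - 1 := rfl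
        obtain ⟨j, hij⟩ : ∃ j, i.val = j + 1 := ⟨i.val - 1, by omega⟩
        rw [hj, hij]
        simp only [Nat.add_sub_cancel]
        calc (k+1)^(j+1) + (k+1)^j = (k+2) * (k+1)^j := by ring
          _ ≤ (k+2) * (k+2)^j := Nat.mul_le_mul_left _ (Nat.pow_le_pow_left (by omega) _)
          _ = (k+2)^(j+1) := (pow_succ' _ _).symm
          _ = (k+1+1)^(j+1) := by norm_num

lemma growth_neg (d : ℕ) : ∀ k : ℕ, ∀ j : ℕ, ∀ h : j < d,
    wordLength (Set.range (gdx d)) (xlift d (((PhiA d)⁻¹ ^ k) (.of ⟨j, h⟩))) ≤ (k+1)^j := by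
  intro k
  induction k with
  | zero =>
      intro j h
      have : (((PhiA d)⁻¹ ^ 0)) (FreeGroup.of ⟨j,h⟩) = FreeGroup.of ⟨j,h⟩ := rfl
      rw [this, ← gdx_eq_xlift]
      calc wordLength (Set.range (gdx d)) (gdx d ⟨j,h⟩) ≤ 1 := wordLength_le_one (Set.mem_range_self _)
        _ ≤ (0+1)^j := by simp
  | succ k ihk =>
      intro j
      induction j with
      | zero =>
          intro h
          have e : ((PhiA d)⁻¹ ^ (k+1)) (FreeGroup.of ⟨0,h⟩)
              = ((PhiA d)⁻¹ ^ k) (PsiM d (FreeGroup.of ⟨0,h⟩)) := by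
            rw [pow_succ, MulAut.mul_apply, PhiA_symm_apply]
          have e2 : PsiM d (FreeGroup.of ⟨0,h⟩) = FreeGroup.of ⟨0,h⟩ := by
            rw [PsiM_of]
            show psa d (0 + 1) = _
            show (if h' : 0 < d then (FreeGroup.of ⟨0, h'⟩ : FreeGroup (Fin d)) else 1) * psa d 0 = _
            rw [dif_pos h]
            show (FreeGroup.of ⟨0,h⟩ : FreeGroup (Fin d)) * 1 = FreeGroup.of ⟨0,h⟩
            rw [mul_one]
          rw [e, e2]
          exact le_trans (ihk 0 h) (by norm_num)
      | succ j ihj =>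
          intro h
          have hj : j < d := by omega
          have e : ((PhiA d)⁻¹ ^ (k+1)) (FreeGroup.of ⟨j+1,h⟩)
              = ((PhiA d)⁻¹ ^ k) (psa d (j+2)) := by
            rw [pow_succ, MulAut.mul_apply, PhiA_symm_apply, PsiM_of]
          have e2 : psa d (j+2) = FreeGroup.of ⟨j+1, h⟩ * psa d (j+1) := by
            show (if h' : j+1 < d then (FreeGroup.of ⟨j+1, h'⟩ : FreeGroup (Fin d)) else 1) * psa d (j+1) = _
            rw [dif_pos h]
          have e3 : ((PhiA d)⁻¹ ^ k) (psa d (j+1)) = ((PhiA d)⁻¹ ^ (k+1)) (FreeGroup.of ⟨j, hj⟩) := by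
            rw [pow_succ, MulAut.mul_apply, PhiA_symm_apply, PsiM_of]
          rw [e, e2, map_mul, e3, map_mul]
          have b1 := ihk (j+1) h
          have b2 := ihj hj
          have hsum := wordLength_mul_le (mem_closT d (((PhiA d)⁻¹ ^ k) (.of ⟨j+1,h⟩)))
            (mem_closT d (((PhiA d)⁻¹ ^ (k+1)) (.of ⟨j,hj⟩)))
          refine le_trans hsum (le_trans (Nat.add_le_add b1 b2) ?_)
          calc (k+1)^(j+1) + (k+2)^j
              ≤ (k+1) * (k+2)^j + (k+2)^j := by
                have : (k+1)^(j+1) = (k+1) * (k+1)^j := (pow_succ' _ _)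
                rw [this]
                exact Nat.add_le_add_right
                  (Nat.mul_le_mul_left _ (Nat.pow_le_pow_left (by omega) _)) _
            _ = (k+2)^(j+1) := by rw [pow_succ']; ring
            _ = (k+1+1)^(j+1) := by norm_num

lemma growth_int (d : ℕ) (hd : 1 ≤ d) (m : ℤ) (i : Fin d) :
    wordLength (Set.range (gdx d)) (xlift d ((PhiA d ^ m) (.of i)))
      ≤ (m.natAbs + 1)^(d-1) := by
  have hle : i.val ≤ d - 1 := by have := i.isLt; omega
  have hmono : (m.natAbs+1)^(i.val) ≤ (m.natAbs+1)^(d-1) :=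
    Nat.pow_le_pow_right (by omega) hle
  rcases Int.natAbs_eq m with he | he
  · have : PhiA d ^ m = PhiA d ^ (m.natAbs : ℕ) := by
      conv_lhs => rw [he]
      exact zpow_natCast _ _
    rw [this]
    exact le_trans (growth_pos d m.natAbs i) hmono
  · have : PhiA d ^ m = ((PhiA d)⁻¹) ^ (m.natAbs : ℕ) := by
      conv_lhs => rw [he]
      rw [zpow_neg, zpow_natCast, inv_pow]
    rw [this]
    have := growth_neg d m.natAbs i.val i.isLt
    simp only [Fin.eta] at this
    exact le_trans this hmono

/- ### upper bound -/

lemma growth_int' (d : ℕ) (hd : 1 ≤ d) (m : ℤ) (w : FreeGroup (Fin d))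
    (hw : ∃ i : Fin d, w = .of i ∨ w = (.of i)⁻¹) :
    wordLength (Set.range (gdx d)) (xlift d ((PhiA d ^ m) w)) ≤ (m.natAbs + 1)^(d-1) := by
  obtain ⟨i, hi | hi⟩ := hw
  · rw [hi]; exact growth_int d hd m i
  · rw [hi, map_inv, map_inv]
    exact le_trans (wordLength_inv_le (mem_closT d _)) (growth_int d hd m i)

lemma upper_main (d : ℕ) (hd : 1 ≤ d) : ∀ l : List (GD d),
    (∀ a ∈ l, a ∈ Set.range (gdGen d) ∨ a⁻¹ ∈ Set.range (gdGen d)) → ∀ m : ℤ,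
    ∃ (f : FreeGroup (Fin d)) (m' : ℤ),
      (Tg d)^m * l.prod = xlift d f * (Tg d)^m' ∧
      wordLength (Set.range (gdx d)) (xlift d f)
        ≤ l.length * (m.natAbs + l.length + 1)^(d-1) := by
  intro l
  induction l with
  | nil =>
      intro _ m
      refine ⟨1, m, by simp, by simp [wordLength_one]⟩
  | cons a l ih =>
      intro hmem m
      have hml : ∀ x ∈ l, x ∈ Set.range (gdGen d) ∨ x⁻¹ ∈ Set.range (gdGen d) :=
        fun x hx => hmem x (List.mem_cons_of_mem a hx)
      -- common treatment for x-letters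
      have hx_case : ∀ w : FreeGroup (Fin d), a = xlift d w →
          (∃ i : Fin d, w = .of i ∨ w = (.of i)⁻¹) →
          ∃ (f : FreeGroup (Fin d)) (m' : ℤ),
            (Tg d)^m * (a :: l).prod = xlift d f * (Tg d)^m' ∧
            wordLength (Set.range (gdx d)) (xlift d f)
              ≤ (a :: l).length * (m.natAbs + (a :: l).length + 1)^(d-1) := by
        intro w haw hwi
        obtain ⟨f', m', heq, hb⟩ := ih hml m
        refine ⟨(PhiA d ^ m) w * f', m', ?_, ?_⟩
        · rw [List.prod_cons, haw, map_mul]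
          calc (Tg d)^m * (xlift d w * l.prod)
              = (Tg d ^ m * xlift d w * Tg d ^ (-m)) * ((Tg d)^m * l.prod) := by group
            _ = xlift d ((PhiA d ^ m) w) * (xlift d f' * (Tg d)^m') := by
                rw [← xlift_PhiA_zpow, heq]
            _ = xlift d ((PhiA d ^ m) w) * xlift d f' * (Tg d)^m' := by group
        · rw [map_mul]
          have h1 := growth_int' d hd m w hwi
          have hsum := wordLength_mul_le (mem_closT d ((PhiA d ^ m) w)) (mem_closT d f')
          refine le_trans hsum (le_trans (Nat.add_le_add h1 hb) ?_)
          have hL : (a :: l).length = l.length + 1 := rfl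
          rw [hL]
          have c1 : (m.natAbs + 1)^(d-1) ≤ (m.natAbs + (l.length + 1) + 1)^(d-1) :=
            Nat.pow_le_pow_left (by omega) _
          have c2 : l.length * (m.natAbs + l.length + 1)^(d-1)
              ≤ l.length * (m.natAbs + (l.length + 1) + 1)^(d-1) :=
            Nat.mul_le_mul_left _ (Nat.pow_le_pow_left (by omega) _)
          calc (m.natAbs + 1)^(d-1) + l.length * (m.natAbs + l.length + 1)^(d-1)
              ≤ (m.natAbs + (l.length+1) + 1)^(d-1)
                + l.length * (m.natAbs + (l.length+1) + 1)^(d-1) := Nat.add_le_add c1 c2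
            _ = (l.length + 1) * (m.natAbs + (l.length+1) + 1)^(d-1) := by ring
      -- common treatment for t-letters
      have ht_case : ∀ ε : ℤ, ε.natAbs = 1 → a = (Tg d)^ε →
          ∃ (f : FreeGroup (Fin d)) (m' : ℤ),
            (Tg d)^m * (a :: l).prod = xlift d f * (Tg d)^m' ∧
            wordLength (Set.range (gdx d)) (xlift d f)
              ≤ (a :: l).length * (m.natAbs + (a :: l).length + 1)^(d-1) := by
        intro ε hε hat
        obtain ⟨f', m', heq, hb⟩ := ih hml (m + ε)
        refine ⟨f', m', ?_, ?_⟩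
        · rw [List.prod_cons, hat, ← mul_assoc, ← zpow_add, heq]
        · refine le_trans hb ?_
          have hL : (a :: l).length = l.length + 1 := rfl
          rw [hL]
          have hna : (m + ε).natAbs ≤ m.natAbs + 1 := by
            have := Int.natAbs_add_le m ε
            omega
          exact Nat.mul_le_mul (by omega) (Nat.pow_le_pow_left (by omega) _)
      rcases hmem a List.mem_cons_self with ⟨s, hs⟩ | ⟨s, hs⟩
      · rcases s with i | u
        · exact hx_case (.of i) (by rw [← hs]; exact (gdx_eq_xlift d i)) ⟨i, Or.inl rfl⟩
        · refine ht_case 1 (by decide) ?_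
          rw [zpow_one]
          exact hs.symm
      · rcases s with i | u
        · refine hx_case ((.of i)⁻¹) ?_ ⟨i, Or.inr rfl⟩
          · have h2 : a⁻¹ = gdx d i := hs.symm
            rw [map_inv, ← gdx_eq_xlift, ← h2, inv_inv]
        · refine ht_case (-1) (by decide) ?_
          have h2 : a⁻¹ = Tg d := hs.symm
          rw [zpow_neg_one, ← h2, inv_inv]

lemma upper_bound (d : ℕ) (hd : 1 ≤ d) (h : GD d) (hh : h ∈ FD d) (r : ℕ)
    (hr : wordLength (Set.range (gdGen d)) h ≤ r) :
    wordLength (Set.range (gdx d)) h ≤ (r+1)^d := by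
  obtain ⟨l, hlen, hmem, hprod⟩ := exists_word (mem_closS d h)
  obtain ⟨f, m', heq, hb⟩ := upper_main d hd l hmem 0
  rw [zpow_zero, one_mul, hprod] at heq
  have hm0 : m' = 0 := by
    have h1 : psiZ d h = 1 := by
      rw [← ker_psiZ] at hh
      exact hh
    have h2 : psiZ d ((Tg d)^m') = Multiplicative.ofAdd m' := by
      rw [map_zpow, psiZ_Tg, ← ofAdd_zsmul]
      norm_num
    have h3 : (1 : Multiplicative ℤ) = Multiplicative.ofAdd m' := by
      rw [← h1, heq, map_mul, psiZ_xlift, one_mul, h2]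
    have := h3.symm
    exact_mod_cast congrArg Multiplicative.toAdd this
  rw [hm0, zpow_zero, mul_one] at heq
  rw [heq]
  have hlr : l.length ≤ r := by omega
  refine le_trans hb ?_
  simp only [Int.natAbs_zero, zero_add]
  calc l.length * (l.length + 1)^(d-1)
      ≤ r * (r + 1)^(d-1) := Nat.mul_le_mul hlr (Nat.pow_le_pow_left (by omega) _)
    _ ≤ (r+1) * (r+1)^(d-1) := Nat.mul_le_mul_right _ (by omega)
    _ = (r+1)^d := by
        rw [← pow_succ']
        congr 1
        omega

/- ### abelianization and the lower bound -/

def vab (d : ℕ) : FreeGroup (Fin d) →* Multiplicative (Fin d → ℤ) :=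
  FreeGroup.lift (fun i => Multiplicative.ofAdd (Pi.single i 1))

lemma vab_of (d : ℕ) (i : Fin d) : vab d (.of i) = Multiplicative.ofAdd (Pi.single i 1) :=
  FreeGroup.lift_apply_of

def Ladd (d : ℕ) : (Fin d → ℤ) →+ (Fin d → ℤ) where
  toFun u := fun j => u j - (if h : j.val + 1 < d then u ⟨j.val + 1, h⟩ else 0)
  map_zero' := by
    funext j
    split_ifs <;> simp
  map_add' u v := by
    funext j
    dsimp only [Pi.add_apply]
    split_ifs with h <;> ring

lemma Ladd_apply (d : ℕ) (u : Fin d → ℤ) (j : Fin d) :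
    Ladd d u j = u j - (if h : j.val + 1 < d then u ⟨j.val + 1, h⟩ else 0) := rfl

def Lmap (d : ℕ) : Multiplicative (Fin d → ℤ) →* Multiplicative (Fin d → ℤ) :=
  AddMonoidHom.toMultiplicative (Ladd d)

lemma Lmap_apply (d : ℕ) (u : Fin d → ℤ) :
    Lmap d (Multiplicative.ofAdd u) = Multiplicative.ofAdd (Ladd d u) := rfl

lemma single_succ_eq_zero (d : ℕ) (i j : Fin d) (hne : ¬ (j.val + 1 = i.val)) :
    (if h : j.val + 1 < d then (Pi.single i 1 : Fin d → ℤ) ⟨j.val+1, h⟩ else 0) = 0 := by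
  split_ifs with h
  · rw [Pi.single_apply, if_neg]
    intro hc
    apply hne
    rw [← hc]
  · rfl

lemma vab_Phi (d : ℕ) : (vab d).comp (PhiM d) = (Lmap d).comp (vab d) := by
  apply FreeGroup.ext_hom
  intro i
  simp only [MonoidHom.comp_apply, PhiM_of, vab_of, Lmap_apply]
  by_cases h0 : i.val = 0
  · rw [phiTgt, if_pos h0, vab_of]
    apply congrArg Multiplicative.ofAdd
    funext j
    rw [Ladd_apply, single_succ_eq_zero d i j (by omega)]
    ring
  · rw [phiTgt, if_neg h0, map_mul, map_inv, vab_of, vab_of, ← ofAdd_neg, ← ofAdd_add]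
    apply congrArg Multiplicative.ofAdd
    funext j
    rw [Pi.add_apply, Pi.neg_apply, Ladd_apply]
    have hfp : (fpred i).val = i.val - 1 := rfl
    by_cases hj : j = fpred i
    · subst hj
      have h1 : (Pi.single (fpred i) 1 : Fin d → ℤ) (fpred i) = 1 := Pi.single_eq_same _ _
      have h2 : (if h : (fpred i).val + 1 < d then (Pi.single i 1 : Fin d → ℤ) ⟨(fpred i).val+1, h⟩ else 0) = 1 := by
        have hlt : (fpred i).val + 1 < d := by
          have := i.isLt; rw [hfp]; omega
        rw [dif_pos hlt, Pi.single_apply, if_pos]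
        apply Fin.ext
        show (fpred i).val + 1 = i.val
        rw [hfp]; omega
      rw [h2, h1]
      ring
    · have h1 : (Pi.single (fpred i) 1 : Fin d → ℤ) j = 0 := by
        rw [Pi.single_apply, if_neg hj]
      have h2 : (if h : j.val + 1 < d then (Pi.single i 1 : Fin d → ℤ) ⟨j.val+1, h⟩ else 0) = 0 := by
        apply single_succ_eq_zero
        intro hc
        apply hj
        apply Fin.ext
        rw [hfp]
        omega
      rw [h2, h1]
      ring

lemma toAdd_Lmap (d : ℕ) (x : Multiplicative (Fin d → ℤ)) :
    (Lmap d x).toAdd = Ladd d x.toAdd := rfl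

def fseq (d : ℕ) (hd0 : 0 < d) : ℕ → FreeGroup (Fin d)
  | 0 => 1
  | n+1 => .of ⟨d-1, by omega⟩ * PhiM d (fseq d hd0 n)

lemma fseq_succ (d : ℕ) (hd0 : 0 < d) (n : ℕ) :
    fseq d hd0 (n+1) = .of ⟨d-1, by omega⟩ * PhiM d (fseq d hd0 n) := rfl

lemma cval (d : ℕ) (hd0 : 0 < d) (n : ℕ) :
    (vab d (fseq d hd0 n)).toAdd
      = fun j : Fin d => (-1:ℤ)^(d-1-j.val) * ((n.choose (d - j.val)) : ℤ) := by
  induction n with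
  | zero =>
      funext j
      show ((vab d 1).toAdd) j = _
      rw [map_one, Nat.choose_eq_zero_of_lt (show 0 < d - j.val by have := j.isLt; omega)]
      simp
  | succ n ih =>
      have hc : vab d (PhiM d (fseq d hd0 n)) = Lmap d (vab d (fseq d hd0 n)) :=
        DFunLike.congr_fun (vab_Phi d) _
      funext j
      rw [fseq_succ, map_mul, toAdd_mul, vab_of, hc, toAdd_Lmap, toAdd_ofAdd, Pi.add_apply,
        Ladd_apply]
      simp only [ih]
      by_cases hj : j.val = d - 1
      · have hjtop : j = (⟨d-1, by omega⟩ : Fin d) := Fin.ext (by simpa using hj)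
        rw [hjtop]
        rw [Pi.single_eq_same]
        rw [dif_neg (by simp; omega)]
        have h1 : d - 1 - ((⟨d-1, by omega⟩ : Fin d)).val = 0 := by simp
        have h2 : d - ((⟨d-1, by omega⟩ : Fin d)).val = 1 := by simp; omega
        rw [h1, h2, Nat.choose_one_right, Nat.choose_one_right]
        push_cast
        ring
      · have hlt : j.val + 1 < d := by have := j.isLt; omega
        rw [Pi.single_eq_of_ne (by
          intro hc2
          apply hj
          rw [hc2])]
        rw [dif_pos hlt]
        obtain ⟨e, he⟩ : ∃ e, d - 1 - j.val = e + 1 := ⟨d - 2 - j.val, by have := j.isLt; omega⟩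
        have h1 : d - 1 - ((⟨j.val + 1, hlt⟩ : Fin d)).val = e := by simp; omega
        have h2 : d - ((⟨j.val + 1, hlt⟩ : Fin d)).val = e + 1 := by simp; omega
        have h3 : d - j.val = e + 2 := by omega
        rw [h1, h2, h3, he, Nat.choose_succ_succ n (e+1)]
        push_cast
        ring

/- ### T-word length bounds coordinates -/

lemma coord_le_aux (d : ℕ) : ∀ l : List (GD d),
    (∀ x ∈ l, x ∈ Set.range (gdx d) ∨ x⁻¹ ∈ Set.range (gdx d)) →
    ∀ f : FreeGroup (Fin d), xlift d f = l.prod →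
    ∀ j : Fin d, ((vab d f).toAdd j).natAbs ≤ l.length := by
  intro l
  induction l with
  | nil =>
      intro _ f hf j
      have : f = 1 := xlift_injective d (by simpa using hf)
      rw [this, map_one]
      simp
  | cons a l ih =>
      intro hmem f hf j
      have hml : ∀ x ∈ l, x ∈ Set.range (gdx d) ∨ x⁻¹ ∈ Set.range (gdx d) :=
        fun x hx => hmem x (List.mem_cons_of_mem a hx)
      -- a = xlift w for a single letter w
      have : ∃ w : FreeGroup (Fin d), a = xlift d w ∧
          ∀ j : Fin d, ((vab d w).toAdd j).natAbs ≤ 1 := by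
        rcases hmem a List.mem_cons_self with ⟨i, hi⟩ | ⟨i, hi⟩
        · refine ⟨.of i, by rw [← hi, gdx_eq_xlift], ?_⟩
          intro j
          rw [vab_of, toAdd_ofAdd, Pi.single_apply]
          split_ifs <;> simp
        · refine ⟨(.of i)⁻¹, ?_, ?_⟩
          · have h2 : a⁻¹ = gdx d i := hi.symm
            rw [map_inv, ← gdx_eq_xlift, ← h2, inv_inv]
          · intro j
            rw [map_inv]
            have : ((vab d (FreeGroup.of i))⁻¹).toAdd = -((vab d (.of i)).toAdd) := rfl
            rw [this, vab_of, toAdd_ofAdd, Pi.neg_apply, Int.natAbs_neg, Pi.single_apply]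
            split_ifs <;> simp
      obtain ⟨w, haw, hwb⟩ := this
      have hf' : xlift d (w⁻¹ * f) = l.prod := by
        rw [map_mul, map_inv, ← haw]
        rw [List.prod_cons] at hf
        rw [hf]
        group
      have hIH := ih hml (w⁻¹ * f) hf' j
      have hdec : f = w * (w⁻¹ * f) := by group
      have : ((vab d f).toAdd j).natAbs
          ≤ ((vab d w).toAdd j).natAbs + ((vab d (w⁻¹ * f)).toAdd j).natAbs := by
        conv_lhs => rw [hdec]
        rw [map_mul, toAdd_mul, Pi.add_apply]
        exact Int.natAbs_add_le _ _
      have hw1 := hwb j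
      simp only [List.length_cons]
      omega

lemma coord_le_wordLength (d : ℕ) (f : FreeGroup (Fin d)) (j : Fin d) :
    ((vab d f).toAdd j).natAbs ≤ wordLength (Set.range (gdx d)) (xlift d f) := by
  obtain ⟨l, hlen, hmem, hprod⟩ := exists_word (mem_closT d f)
  rw [← hlen]
  exact coord_le_aux d l hmem f hprod.symm j

/- ### the witness element -/

lemma wId (d : ℕ) (hd0 : 0 < d) (n : ℕ) :
    (gdx d ⟨d-1, by omega⟩ * Tg d)^n * (Tg d)^(-(n:ℤ)) = xlift d (fseq d hd0 n) := by
  induction n with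
  | zero => simp [fseq]
  | succ n ih =>
      have ihe : (gdx d ⟨d-1, by omega⟩ * Tg d)^n = xlift d (fseq d hd0 n) * (Tg d)^((n:ℤ)) := by
        rw [← ih]
        group
      rw [pow_succ', ihe, fseq_succ, map_mul, xlift_Phi, ← gdx_eq_xlift,
        show (((n:ℕ)+1:ℕ) : ℤ) = (n:ℤ)+1 by push_cast; ring]
      group

lemma wS_bound (d : ℕ) (hd0 : 0 < d) (n : ℕ) :
    wordLength (Set.range (gdGen d)) ((gdx d ⟨d-1, by omega⟩ * Tg d)^n * (Tg d)^(-(n:ℤ)))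
      ≤ 3 * n := by
  have hX : wordLength (Set.range (gdGen d)) (gdx d ⟨d-1, by omega⟩) ≤ 1 :=
    wordLength_le_one ⟨Sum.inl ⟨d-1, by omega⟩, rfl⟩
  have hT : wordLength (Set.range (gdGen d)) (Tg d) ≤ 1 :=
    wordLength_le_one ⟨Sum.inr (), rfl⟩
  have hXT : wordLength (Set.range (gdGen d)) (gdx d ⟨d-1, by omega⟩ * Tg d) ≤ 2 :=
    le_trans (wordLength_mul_le (mem_closS d _) (mem_closS d _)) (by omega)
  have h1 : wordLength (Set.range (gdGen d)) ((gdx d ⟨d-1, by omega⟩ * Tg d)^n) ≤ 2 * n :=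
    le_trans (wordLength_pow_le (mem_closS d _) n) (by
      calc n * wordLength (Set.range (gdGen d)) (gdx d ⟨d-1, by omega⟩ * Tg d)
          ≤ n * 2 := Nat.mul_le_mul_left _ hXT
        _ = 2 * n := by ring)
  have h2 : wordLength (Set.range (gdGen d)) ((Tg d)^(-(n:ℤ))) ≤ n := by
    rw [zpow_neg, zpow_natCast]
    refine le_trans (wordLength_inv_le (mem_closS d _)) ?_
    refine le_trans (wordLength_pow_le (mem_closS d _) n) ?_
    calc n * wordLength (Set.range (gdGen d)) (Tg d) ≤ n * 1 := Nat.mul_le_mul_left _ hT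
      _ = n := by ring
  refine le_trans (wordLength_mul_le (mem_closS d _) (mem_closS d _)) (by omega)

/- ### distortion bounds -/

lemma dist_upper (d : ℕ) (hd : 1 ≤ d) (r : ℕ) :
    distortion (Set.range (gdGen d)) (Set.range (gdx d)) (FD d) r ≤ (r+1)^d := by
  apply csSup_le'
  rintro n ⟨h, hh, hle, rfl⟩
  exact upper_bound d hd h hh r hle

lemma dist_bddAbove (d : ℕ) (hd : 1 ≤ d) (r : ℕ) :
    BddAbove {n | ∃ h ∈ FD d, wordLength (Set.range (gdGen d)) h ≤ r ∧
      wordLength (Set.range (gdx d)) h = n} := by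
  refine ⟨(r+1)^d, ?_⟩
  rintro n ⟨h, hh, hle, rfl⟩
  exact upper_bound d hd h hh r hle

lemma dist_lower (d : ℕ) (hd : 1 ≤ d) (n : ℕ) :
    n.choose d ≤ distortion (Set.range (gdGen d)) (Set.range (gdx d)) (FD d) (3*n) := by
  have hd0 : 0 < d := hd
  set h : GD d := xlift d (fseq d hd0 n) with hh'
  have hFD : h ∈ FD d := by
    rw [← range_xlift]
    exact ⟨_, rfl⟩
  have hS : wordLength (Set.range (gdGen d)) h ≤ 3*n := by
    rw [hh', ← wId d hd0 n]
    exact wS_bound d hd0 n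
  have hmem : wordLength (Set.range (gdx d)) h ∈
      {m | ∃ g ∈ FD d, wordLength (Set.range (gdGen d)) g ≤ 3*n ∧
        wordLength (Set.range (gdx d)) g = m} := ⟨h, hFD, hS, rfl⟩
  have hsup : wordLength (Set.range (gdx d)) h
      ≤ distortion (Set.range (gdGen d)) (Set.range (gdx d)) (FD d) (3*n) :=
    le_csSup (dist_bddAbove d hd (3*n)) hmem
  have hcoord := coord_le_wordLength d (fseq d hd0 n) ⟨0, hd0⟩
  rw [cval d hd0 n] at hcoord
  simp only at hcoord
  have hval : (((-1:ℤ)^(d-1-(0:ℕ)) * ((n.choose (d - 0)) : ℤ))).natAbs = n.choose d := by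
    rw [Int.natAbs_mul]
    have : ((-1:ℤ)^(d-1-(0:ℕ))).natAbs = 1 := by
      rw [Int.natAbs_pow]
      simp
    rw [this, one_mul, Nat.sub_zero, Int.natAbs_natCast]
  rw [hval] at hcoord
  exact le_trans hcoord hsup

lemma choose_lb (d n : ℕ) (hd : 1 ≤ d) (hn : 2*d ≤ n) :
    n^d ≤ (2*d)^d * n.choose d := by
  have h1 : (n + 1 - d)^d ≤ n.descFactorial d := Nat.pow_sub_le_descFactorial n d
  rw [Nat.descFactorial_eq_factorial_mul_choose] at h1
  have h2 : d.factorial * n.choose d ≤ d^d * n.choose d :=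
    Nat.mul_le_mul_right _ (Nat.factorial_le_pow d)
  have h3 : n ≤ 2 * (n + 1 - d) := by omega
  calc n^d ≤ (2 * (n + 1 - d))^d := Nat.pow_le_pow_left h3 d
    _ = 2^d * (n + 1 - d)^d := mul_pow 2 _ d
    _ ≤ 2^d * (d.factorial * n.choose d) := Nat.mul_le_mul_left _ h1
    _ ≤ 2^d * (d^d * n.choose d) := Nat.mul_le_mul_left _ h2
    _ = (2*d)^d * n.choose d := by rw [mul_pow]; ring

theorem stmt13 (d : ℕ) (hd : 2 ≤ d) :
    -- the distortion of `F_d` in `G_d` is a polynomial of degree `d`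
    FEquiv (distortion (Set.range (gdGen d)) (Set.range (gdx d)) (FD d))
      (fun n => n ^ d) ∧
    -- moreover `F_d` is a normal finitely generated free subgroup
    (FD d).Normal ∧ (FD d).FG ∧
    Function.Injective (xlift d) ∧ (xlift d).range = FD d ∧
    -- with `G_d / F_d` infinite cyclic
    ∃ ψ : GD d →* Multiplicative ℤ, Function.Surjective ψ ∧ ψ.ker = FD d := by
  have hd1 : 1 ≤ d := by omega
  refine ⟨⟨?_, ?_⟩, FD_normal d, FD_fg d, xlift_injective d, range_xlift d,
    psiZ d, psiZ_surjective d, ker_psiZ d⟩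
  · refine ⟨1, 2, 1, 0, one_pos, two_pos, one_pos, ?_⟩
    intro x hx
    show distortion (Set.range (gdGen d)) (Set.range (gdx d)) (FD d) x ≤ 1 * (2*x)^d + 1*x
    have h1 := dist_upper d hd1 x
    have h2 : (x+1)^d ≤ (2*x)^d := Nat.pow_le_pow_left (by omega) d
    omega
  · refine ⟨(2*d)^d, 3, 1, 2*d, Nat.pow_pos (by omega), by omega, one_pos, ?_⟩
    intro x hx
    show x^d ≤ (2*d)^d * distortion (Set.range (gdGen d)) (Set.range (gdx d)) (FD d) (3*x) + 1*x
    have h1 : x^d ≤ (2*d)^d * x.choose d := choose_lb d x hd1 (by omega)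
    have h2 : x.choose d ≤ distortion (Set.range (gdGen d)) (Set.range (gdx d)) (FD d) (3*x) :=
      dist_lower d hd1 x
    have h3 : (2*d)^d * x.choose d ≤ (2*d)^d * distortion (Set.range (gdGen d)) (Set.range (gdx d)) (FD d) (3*x) :=
      Nat.mul_le_mul_left _ h2
    omega
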